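/- Let K₀ = 0 and F₀ > 0. Define λ(t) := (1 + (8/3)·F₀·t)^{1/4} and f(t) := (1 + (8/3)·F₀·t)^{-1/4} for t ≥ 0. Then λ and f are differentiable and positive on [0,∞), λ(0) = f(0) = 1, f(t) = λ(t)⁻¹, and λ'(t) = (2/3)·F₀·λ(t)⁻³ for all t ≥ 0; consequently (λ, f) satisfies the normalized S¹-triple Ricci flow system with parameters (0, F₀): λ'(t) = -(2/3)·K₀ + (2/3)·F₀·f(t)²·λ(t)⁻¹ and f'(t) = (2/3)·K₀·f(t)·λ(t)⁻¹ - (2/3)·F₀·f(t)³·λ(t)⁻². -/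

import Mathlib

/-- For `K₀ = 0` and `F₀ > 0`, the functions
`λ(t) = (1 + (8/3)F₀ t)^{1/4}` and `f(t) = (1 + (8/3)F₀ t)^{-1/4}` are differentiable and
positive on `[0,∞)`, satisfy `λ(0) = f(0) = 1`, `f = λ⁻¹`, `λ' = (2/3)F₀ λ⁻³`, and solve
the normalized S¹-triple Ricci flow system with parameters `(0, F₀)`. -/
theorem stmt_13 (K₀ F₀ : ℝ) (hK₀ : K₀ = 0) (hF₀ : 0 < F₀)
    (lam f : ℝ → ℝ)
    (hlam : lam = fun t => (1 + (8/3) * F₀ * t) ^ ((1:ℝ)/4))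
    (hf : f = fun t => (1 + (8/3) * F₀ * t) ^ (-(1:ℝ)/4)) :
    (∀ t ∈ Set.Ici (0:ℝ), 0 < lam t ∧ 0 < f t) ∧
    (∀ t ∈ Set.Ici (0:ℝ),
      DifferentiableWithinAt ℝ lam (Set.Ici 0) t ∧
      DifferentiableWithinAt ℝ f (Set.Ici 0) t) ∧
    lam 0 = 1 ∧ f 0 = 1 ∧
    (∀ t ∈ Set.Ici (0:ℝ), f t = (lam t)⁻¹) ∧
    (∀ t ∈ Set.Ici (0:ℝ),
      HasDerivWithinAt lam ((2/3) * F₀ * ((lam t)^3)⁻¹) (Set.Ici 0) t) ∧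
    (∀ t ∈ Set.Ici (0:ℝ),
      HasDerivWithinAt lam (-(2/3) * K₀ + (2/3) * F₀ * (f t)^2 * (lam t)⁻¹) (Set.Ici 0) t) ∧
    (∀ t ∈ Set.Ici (0:ℝ),
      HasDerivWithinAt f
        ((2/3) * K₀ * f t * (lam t)⁻¹ - (2/3) * F₀ * (f t)^3 * ((lam t)^2)⁻¹)
        (Set.Ici 0) t) := by
  set u : ℝ → ℝ := fun t => 1 + (8/3) * F₀ * t with hu
  have hupos : ∀ t ∈ Set.Ici (0:ℝ), 0 < u t := by
    intro t ht
    have ht' : (0:ℝ) ≤ t := ht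
    have : (0:ℝ) ≤ (8/3) * F₀ * t := by positivity
    simp only [hu]; linarith
  -- derivative of u
  have hud : ∀ t : ℝ, HasDerivAt u ((8/3) * F₀) t := by
    intro t
    exact (((hasDerivAt_id' t).const_mul ((8/3) * F₀)).const_add 1).congr_deriv (by ring)
  -- derivative of lam
  have hlamd : ∀ t ∈ Set.Ici (0:ℝ),
      HasDerivAt lam ((2/3) * F₀ * u t ^ ((1:ℝ)/4 - 1)) t := by
    intro t ht
    have h := (hud t).rpow_const (p := (1:ℝ)/4) (Or.inl (hupos t ht).ne')
    rw [hlam]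
    convert h using 1
    ring
  -- derivative of f
  have hfd : ∀ t ∈ Set.Ici (0:ℝ),
      HasDerivAt f (-(2/3) * F₀ * u t ^ (-(1:ℝ)/4 - 1)) t := by
    intro t ht
    have h := (hud t).rpow_const (p := -(1:ℝ)/4) (Or.inl (hupos t ht).ne')
    rw [hf]
    convert h using 1
    ring
  have hlampos : ∀ t ∈ Set.Ici (0:ℝ), 0 < lam t := by
    intro t ht; rw [hlam]; exact Real.rpow_pos_of_pos (hupos t ht) _
  have hfpos : ∀ t ∈ Set.Ici (0:ℝ), 0 < f t := by
    intro t ht; rw [hf]; exact Real.rpow_pos_of_pos (hupos t ht) _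
  -- key power identities
  have hlam3 : ∀ t ∈ Set.Ici (0:ℝ), ((lam t)^3)⁻¹ = u t ^ ((1:ℝ)/4 - 1) := by
    intro t ht
    have h0 := (hupos t ht).le
    rw [hlam]
    simp only
    rw [← Real.rpow_natCast ((u t) ^ ((1:ℝ)/4)) 3, ← Real.rpow_mul h0,
      ← Real.rpow_neg h0]
    norm_num
  have hf3 : ∀ t ∈ Set.Ici (0:ℝ),
      (f t)^3 * ((lam t)^2)⁻¹ = u t ^ (-(1:ℝ)/4 - 1) := by
    intro t ht
    have h0 := (hupos t ht).le
    rw [hlam, hf]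
    simp only
    rw [← Real.rpow_natCast ((u t) ^ (-(1:ℝ)/4)) 3, ← Real.rpow_natCast ((u t) ^ ((1:ℝ)/4)) 2,
      ← Real.rpow_mul h0, ← Real.rpow_mul h0, ← Real.rpow_neg h0, ← Real.rpow_add (hupos t ht)]
    norm_num
  have hflam : ∀ t ∈ Set.Ici (0:ℝ), f t = (lam t)⁻¹ := by
    intro t ht
    have h0 := (hupos t ht).le
    rw [hlam, hf]
    simp only
    rw [← Real.rpow_neg h0]
    norm_num
    rfl
  have hderiv1 : ∀ t ∈ Set.Ici (0:ℝ),
      HasDerivWithinAt lam ((2/3) * F₀ * ((lam t)^3)⁻¹) (Set.Ici 0) t := by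
    intro t ht
    rw [hlam3 t ht]
    exact (hlamd t ht).hasDerivWithinAt
  refine ⟨fun t ht => ⟨hlampos t ht, hfpos t ht⟩,
    fun t ht => ⟨(hlamd t ht).differentiableAt.differentiableWithinAt,
      (hfd t ht).differentiableAt.differentiableWithinAt⟩,
    ?_, ?_, hflam, hderiv1, ?_, ?_⟩
  · rw [hlam]; norm_num
  · rw [hf]; norm_num
  · intro t ht
    have h := hderiv1 t ht
    have heq : (2/3) * F₀ * ((lam t)^3)⁻¹
        = -(2/3) * K₀ + (2/3) * F₀ * (f t)^2 * (lam t)⁻¹ := by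
      rw [hK₀, hflam t ht]
      field_simp
      ring
    rwa [heq] at h
  · intro t ht
    have h := (hfd t ht).hasDerivWithinAt (s := Set.Ici 0)
    have heq : -(2/3) * F₀ * u t ^ (-(1:ℝ)/4 - 1)
        = (2/3) * K₀ * f t * (lam t)⁻¹ - (2/3) * F₀ * (f t)^3 * ((lam t)^2)⁻¹ := by
      rw [hK₀]
      rw [← hf3 t ht]
      ring
    rwa [heq] at h
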